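/- Let $K = (-3,3)^2 \subset \mathbb{R}^2$, $K_1 = (-2,-1)\times(-1,1)$, $K_2 = (1,2)\times(-1,1)$, and for $\delta > 0$ define the weight $\alpha(x) = \delta^{-1}$ for $x \in K_1 \cup K_2$ and $\alpha(x) = 1$ otherwise. Define $u(x) = x_1$ for $|x_1| \le 1$, $u(x) = 1$ for $1 < x_1 < 3$, $u(x) = -1$ for $-3 < x_1 < -1$. Then $u \in H^1(K)$ and $\inf_{\mu\in\mathbb{R}} \|u - \mu\|_{L^2_\alpha(K)} / \|\nabla u\|_{L^2_\alpha(K)} \ge 1/\sqrt{3\delta}$. In particular, the weighted Poincaré constant $\sup_{u\in H^1(K)}\inf_{\mu}\|u-\mu\|_{L^2_\alpha(K)}/\|\nabla u\|_{L^2_\alpha(K)}$ is unbounded as $\delta \to 0$. -/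

import Mathlib

open MeasureTheory Set

/-- **High-contrast example** (Example 3.2): on `K = (-3,3)²` with weight `α = δ⁻¹`
on the two inclusions `K₁, K₂` and `1` elsewhere, the truncated linear profile
`u(x) = max(-1, min(1, x₁))` lies in `H¹(K)` (it is Lipschitz) and satisfies
`inf_μ ‖u-μ‖_{L²_α(K)} / ‖∇u‖_{L²_α(K)} ≥ 1/√(3δ)`; hence the weighted Poincaré
constant blows up as `δ → 0`. -/
theorem stmt_2 (δ : ℝ) (hδ : 0 < δ)
    (K K1 K2 : Set (ℝ × ℝ))
    (hK : K = Set.Ioo (-3 : ℝ) 3 ×ˢ Set.Ioo (-3 : ℝ) 3)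
    (hK1 : K1 = Set.Ioo (-2 : ℝ) (-1) ×ˢ Set.Ioo (-1 : ℝ) 1)
    (hK2 : K2 = Set.Ioo (1 : ℝ) 2 ×ˢ Set.Ioo (-1 : ℝ) 1)
    (α : ℝ × ℝ → ℝ)
    (hα : ∀ x, (x ∈ K1 ∪ K2 → α x = δ⁻¹) ∧ (x ∉ K1 ∪ K2 → α x = 1))
    (u : ℝ × ℝ → ℝ) (hu : u = fun x => max (-1) (min 1 x.1))
    (gradsq : ℝ × ℝ → ℝ)  -- `|∇u|²`, equal to 1 on `{|x₁| < 1}` and 0 elsewhere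
    (hgrad : ∀ x : ℝ × ℝ, (x.1 ∈ Set.Ioo (-1 : ℝ) 1 → gradsq x = 1) ∧
      (x.1 ∉ Set.Ioo (-1 : ℝ) 1 → gradsq x = 0)) :
    LipschitzWith 1 u ∧
      ∀ μ : ℝ,
        1 / Real.sqrt (3 * δ) ≤
          Real.sqrt (∫ x in K, α x * (u x - μ) ^ 2) /
            Real.sqrt (∫ x in K, α x * gradsq x) := by
  have hLip : LipschitzWith 1 u := by
    rw [hu]; exact (LipschitzWith.prod_fst.const_min 1).const_max (-1)
  have mK1 : MeasurableSet K1 := by rw [hK1]; exact measurableSet_Ioo.prod measurableSet_Ioo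
  have mK2 : MeasurableSet K2 := by rw [hK2]; exact measurableSet_Ioo.prod measurableSet_Ioo
  have mK : MeasurableSet K := by rw [hK]; exact measurableSet_Ioo.prod measurableSet_Ioo
  have hvol : ∀ a b c d : ℝ, volume (Ioo a b ×ˢ Ioo c d)
      = ENNReal.ofReal (b - a) * ENNReal.ofReal (d - c) := by
    intro a b c d
    rw [Measure.volume_eq_prod, Measure.prod_prod, Real.volume_Ioo, Real.volume_Ioo]
  -- α as a piecewise function
  classical
  have hαdef : α = fun x => if x ∈ K1 ∪ K2 then δ⁻¹ else 1 := by
    funext x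
    by_cases hx : x ∈ K1 ∪ K2
    · simp [hx, (hα x).1 hx]
    · simp [hx, (hα x).2 hx]
  have hαmeas : Measurable α := by
    rw [hαdef]; exact Measurable.ite (mK1.union mK2) measurable_const measurable_const
  -- denominator equals 12
  have hDen : (∫ x in K, α x * gradsq x) = 12 := by
    have key : ∀ x : ℝ × ℝ, α x * gradsq x
        = ((Ioo (-1 : ℝ) 1) ×ˢ (univ : Set ℝ)).indicator (fun _ => (1 : ℝ)) x := by
      intro x
      by_cases hx : x.1 ∈ Ioo (-1 : ℝ) 1
      · have hnot : x ∉ K1 ∪ K2 := by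
          rw [hK1, hK2]
          rintro (⟨h1, _⟩ | ⟨h1, _⟩) <;>
            · simp only [mem_Ioo] at h1 hx; linarith [hx.1, hx.2, h1.1, h1.2]
        have hxin : x ∈ (Ioo (-1 : ℝ) 1) ×ˢ (univ : Set ℝ) := ⟨hx, mem_univ _⟩
        rw [(hα x).2 hnot, (hgrad x).1 hx, Set.indicator_of_mem hxin]
        ring
      · have hxout : x ∉ (Ioo (-1 : ℝ) 1) ×ˢ (univ : Set ℝ) := fun h => hx h.1
        rw [(hgrad x).2 hx, Set.indicator_of_notMem hxout]
        ring
    rw [show (fun x : ℝ × ℝ => α x * gradsq x)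
        = ((Ioo (-1 : ℝ) 1) ×ˢ (univ : Set ℝ)).indicator (fun _ => (1 : ℝ)) from funext key]
    rw [setIntegral_indicator (measurableSet_Ioo.prod MeasurableSet.univ)]
    have hset : K ∩ (Ioo (-1 : ℝ) 1) ×ˢ (univ : Set ℝ) = Ioo (-1 : ℝ) 1 ×ˢ Ioo (-3 : ℝ) 3 := by
      rw [hK, Set.prod_inter_prod, Set.inter_univ, Set.Ioo_inter_Ioo]
      norm_num
    rw [hset, setIntegral_const, measureReal_def, hvol]
    norm_num [ENNReal.toReal_mul]
  rw [hDen]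
  refine ⟨hLip, fun μ => ?_⟩
  set f : ℝ × ℝ → ℝ := fun x => α x * (u x - μ) ^ 2 with hf
  have hfmeas : Measurable f :=
    hαmeas.mul (((hLip.continuous.measurable).sub measurable_const).pow measurable_const)
  have hfnonneg : ∀ x, 0 ≤ f x := by
    intro x
    have hα0 : 0 ≤ α x := by
      by_cases hx : x ∈ K1 ∪ K2
      · rw [(hα x).1 hx]; positivity
      · rw [(hα x).2 hx]; norm_num
    positivity
  have hfbdd : ∀ x, ‖f x‖ ≤ max 1 δ⁻¹ * (1 + |μ|) ^ 2 := by
    intro x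
    have hα0 : α x ≤ max 1 δ⁻¹ ∧ 0 ≤ α x := by
      by_cases hx : x ∈ K1 ∪ K2
      · rw [(hα x).1 hx]; exact ⟨le_max_right _ _, by positivity⟩
      · rw [(hα x).2 hx]; exact ⟨le_max_left _ _, by norm_num⟩
    have hub : |u x| ≤ 1 := by
      rw [hu]
      simp only [abs_le]
      constructor
      · exact le_max_left _ _
      · exact max_le (by norm_num) (min_le_left _ _)
    have h2 : (u x - μ) ^ 2 ≤ (1 + |μ|) ^ 2 := by
      have := abs_sub (u x) μ
      nlinarith [abs_nonneg (u x), abs_nonneg μ, sq_abs (u x - μ),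
        abs_sub_abs_le_abs_sub (u x) μ, abs_sub (u x) μ, neg_abs_le (u x - μ),
        le_abs_self (u x - μ), abs_sub_le (u x) 0 μ, abs_nonneg (u x - μ)]
    rw [Real.norm_eq_abs, abs_of_nonneg (hfnonneg x)]
    have : f x ≤ max 1 δ⁻¹ * (1 + |μ|) ^ 2 := by
      apply mul_le_mul hα0.1 h2 (by positivity) (by positivity)
    exact this
  have hKvol : volume K ≠ ⊤ := by
    rw [hK, hvol]; exact ENNReal.mul_ne_top ENNReal.ofReal_ne_top ENNReal.ofReal_ne_top
  have hfint : IntegrableOn f K := by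
    exact Measure.integrableOn_of_bounded hKvol hfmeas.aestronglyMeasurable
      (ae_of_all _ hfbdd)
  -- u = -1 on K1, u = 1 on K2
  have hu1 : EqOn f (fun _ => δ⁻¹ * (-1 - μ) ^ 2) K1 := by
    intro x hx
    have hx1 : x.1 ∈ Ioo (-2 : ℝ) (-1) := by rw [hK1] at hx; exact hx.1
    have : u x = -1 := by
      simp only [hu, mem_Ioo] at hx1 ⊢
      rw [min_eq_right (by linarith : x.1 ≤ 1), max_eq_left (by linarith : x.1 ≤ -1)]
    simp only [hf, this, (hα x).1 (Or.inl hx)]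
  have hu2 : EqOn f (fun _ => δ⁻¹ * (1 - μ) ^ 2) K2 := by
    intro x hx
    have hx1 : x.1 ∈ Ioo (1 : ℝ) 2 := by rw [hK2] at hx; exact hx.1
    have : u x = 1 := by
      simp only [hu, mem_Ioo] at hx1 ⊢
      rw [min_eq_left (by linarith : (1 : ℝ) ≤ x.1), max_eq_right (by linarith : (-1 : ℝ) ≤ 1)]
    simp only [hf, this, (hα x).1 (Or.inr hx)]
  have hK1vol : (volume K1).toReal = 2 := by
    rw [hK1, hvol]; norm_num [ENNReal.toReal_mul]
  have hK2vol : (volume K2).toReal = 2 := by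
    rw [hK2, hvol]; norm_num [ENNReal.toReal_mul]
  have hsub : K1 ∪ K2 ⊆ K := by
    rw [hK1, hK2, hK]
    rintro ⟨x, y⟩ (⟨h1, h2⟩ | ⟨h1, h2⟩) <;>
      simp only [mem_Ioo, mem_prod] at * <;> constructor <;> constructor <;> linarith
  have hdisj : Disjoint K1 K2 := by
    rw [hK1, hK2, Set.disjoint_left]
    rintro ⟨x, y⟩ ⟨h1, _⟩ ⟨h2, _⟩
    simp only [mem_Ioo] at h1 h2
    linarith
  have hI1 : ∫ x in K1, f x = 2 * (δ⁻¹ * (-1 - μ) ^ 2) := by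
    rw [setIntegral_congr_fun mK1 hu1, setIntegral_const, measureReal_def, hK1vol, smul_eq_mul]
  have hI2 : ∫ x in K2, f x = 2 * (δ⁻¹ * (1 - μ) ^ 2) := by
    rw [setIntegral_congr_fun mK2 hu2, setIntegral_const, measureReal_def, hK2vol, smul_eq_mul]
  have hunion : ∫ x in K1 ∪ K2, f x
      = 2 * (δ⁻¹ * (-1 - μ) ^ 2) + 2 * (δ⁻¹ * (1 - μ) ^ 2) := by
    rw [setIntegral_union hdisj mK2 (hfint.mono_set (hsub.trans' subset_union_left))
      (hfint.mono_set (hsub.trans' subset_union_right)), hI1, hI2]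
  have hN : 4 / δ ≤ ∫ x in K, f x := by
    have hmono : ∫ x in K1 ∪ K2, f x ≤ ∫ x in K, f x :=
      setIntegral_mono_set hfint (ae_of_all _ hfnonneg) (HasSubset.Subset.eventuallyLE hsub)
    have : 4 / δ ≤ ∫ x in K1 ∪ K2, f x := by
      rw [hunion]
      have h4 : 4 / δ ≤ 2 * (δ⁻¹ * (-1 - μ) ^ 2) + 2 * (δ⁻¹ * (1 - μ) ^ 2) := by
        rw [div_eq_mul_inv]
        nlinarith [sq_nonneg μ, inv_pos.mpr hδ]
      exact h4
    linarith
  -- final arithmetic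
  have h12 : (0:ℝ) < Real.sqrt 12 := Real.sqrt_pos.mpr (by norm_num)
  have heq : 1 / Real.sqrt (3 * δ) = Real.sqrt (4 / δ) / Real.sqrt 12 := by
    rw [← Real.sqrt_div (by positivity)]
    rw [show (4 / δ) / 12 = (3 * δ)⁻¹ by field_simp; ring]
    rw [Real.sqrt_inv, one_div]
  rw [heq]
  have := Real.sqrt_le_sqrt hN
  gcongr
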